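/- Let X be a non-degenerate real random variable whose distribution is symmetric around 0, set Y = X, X_n = X and Y_n = -X for all n. Let (Y,Y') and (Y_n,Y_n') denote the corresponding Markov products (conditionally independent copies given X_n resp. X). Then (Y_n, Y_n') has the same distribution as (Y, Y') for every n, yet (X_n, Y_n) = (X, -X) does not have the same distribution as (X, Y) = (X, X). -/

import Mathlib

open MeasureTheory ProbabilityTheory

variable {Ω : Type*} [mΩ : MeasurableSpace Ω] [StandardBorelSpace Ω] [Nonempty Ω]

/-- `Y'` is a conditionally independent copy of `Y` given `X`:
`Y ⊥ Y' | X` and the conditional distributions of `Y` and `Y'` given `X` coincide. -/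
def IsCondIndepCopy {α : Type*} [mα : MeasurableSpace α]
    (μ : Measure Ω) [IsFiniteMeasure μ] (X : Ω → α) (hX : Measurable X)
    (Y Y' : Ω → ℝ) : Prop :=
  CondIndepFun (mα.comap X) hX.comap_le Y Y' μ ∧
  ∀ s : Set ℝ, MeasurableSet s →
    μ[(Y ⁻¹' s).indicator (fun _ => (1:ℝ)) | mα.comap X] =ᵐ[μ]
      μ[(Y' ⁻¹' s).indicator (fun _ => (1:ℝ)) | mα.comap X]



open Set in
omit [StandardBorelSpace Ω] [Nonempty Ω] in
lemma copy_of_measurable_eq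
    (μ : Measure Ω) [IsProbabilityMeasure μ]
    (X : Ω → ℝ) (hX : Measurable X)
    (Z Y' : Ω → ℝ) (hY' : Measurable Y')
    (hZm : ∀ s : Set ℝ, MeasurableSet s →
      MeasurableSet[(inferInstance : MeasurableSpace ℝ).comap X] (Z ⁻¹' s))
    (h : ∀ s : Set ℝ, MeasurableSet s →
      μ[(Z ⁻¹' s).indicator (fun _ => (1:ℝ)) | (inferInstance : MeasurableSpace ℝ).comap X] =ᵐ[μ]
        μ[(Y' ⁻¹' s).indicator (fun _ => (1:ℝ)) | (inferInstance : MeasurableSpace ℝ).comap X]) :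
    Y' =ᵐ[μ] Z := by
  have hm : (inferInstance : MeasurableSpace ℝ).comap X ≤ mΩ := hX.comap_le
  -- key: for any measurable s, μ (Y' ⁻¹' s ∩ Z ⁻¹' sᶜ) = 0
  have key : ∀ s : Set ℝ, MeasurableSet s → μ (Y' ⁻¹' s ∩ Z ⁻¹' sᶜ) = 0 := by
    intro s hs
    have hZs := hZm s hs
    have hZsc := hZm sᶜ hs.compl
    have hind_sm : StronglyMeasurable[(inferInstance : MeasurableSpace ℝ).comap X]
        ((Z ⁻¹' s).indicator (fun _ => (1:ℝ))) :=
      StronglyMeasurable.indicator (by exact stronglyMeasurable_const) hZs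
    have hind_int : Integrable ((Z ⁻¹' s).indicator (fun _ => (1:ℝ))) μ :=
      (integrable_const (1:ℝ)).indicator (hm _ hZs)
    have hY_int : Integrable ((Y' ⁻¹' s).indicator (fun _ => (1:ℝ))) μ :=
      (integrable_const (1:ℝ)).indicator (hY' hs)
    have hce : μ[(Z ⁻¹' s).indicator (fun _ => (1:ℝ)) |
          (inferInstance : MeasurableSpace ℝ).comap X] =
        (Z ⁻¹' s).indicator (fun _ => (1:ℝ)) :=
      condExp_of_stronglyMeasurable hm hind_sm hind_int
    have heq : μ[(Y' ⁻¹' s).indicator (fun _ => (1:ℝ)) |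
          (inferInstance : MeasurableSpace ℝ).comap X] =ᵐ[μ]
        (Z ⁻¹' s).indicator (fun _ => (1:ℝ)) := by
      filter_upwards [(h s hs).symm] with ω hω
      rw [hω, hce]
    have hint_eq : ∫ ω in Z ⁻¹' sᶜ, (Y' ⁻¹' s).indicator (fun _ => (1:ℝ)) ω ∂μ
        = ∫ ω in Z ⁻¹' sᶜ, (Z ⁻¹' s).indicator (fun _ => (1:ℝ)) ω ∂μ := by
      rw [← setIntegral_condExp hm hY_int hZsc]
      exact setIntegral_congr_ae (hm _ hZsc) (heq.mono fun ω hω _ => hω)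
    have hrhs : ∫ ω in Z ⁻¹' sᶜ, (Z ⁻¹' s).indicator (fun _ => (1:ℝ)) ω ∂μ = 0 := by
      rw [setIntegral_indicator (hm _ hZs)]
      have : Z ⁻¹' sᶜ ∩ Z ⁻¹' s = ∅ := by
        ext ω; simp [Set.mem_preimage]
      rw [this]; simp
    have hlhs : ∫ ω in Z ⁻¹' sᶜ, (Y' ⁻¹' s).indicator (fun _ => (1:ℝ)) ω ∂μ
        = (μ (Z ⁻¹' sᶜ ∩ Y' ⁻¹' s)).toReal := by
      rw [setIntegral_indicator (hY' hs), setIntegral_const, smul_eq_mul, mul_one]; rfl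
    have h0 : (μ (Z ⁻¹' sᶜ ∩ Y' ⁻¹' s)).toReal = 0 := by
      rw [← hlhs, hint_eq, hrhs]
    rcases (ENNReal.toReal_eq_zero_iff _).mp h0 with h' | h'
    · rw [Set.inter_comm] at h'; exact h'
    · exact absurd h' (measure_ne_top μ _)
  -- cover {Y' ≠ Z} by countably many such null sets
  have cover : {ω | Y' ω ≠ Z ω} ⊆ ⋃ q : ℚ,
      (Y' ⁻¹' Iic (q:ℝ) ∩ Z ⁻¹' (Iic (q:ℝ))ᶜ) ∪ (Y' ⁻¹' (Iic (q:ℝ))ᶜ ∩ Z ⁻¹' (Iic (q:ℝ))ᶜᶜ) := by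
    intro ω hω
    rcases lt_or_gt_of_ne hω with hlt | hlt
    · obtain ⟨q, hq1, hq2⟩ := exists_rat_btwn hlt
      exact Set.mem_iUnion.mpr ⟨q, Or.inl ⟨le_of_lt hq1,
        by simp [Set.mem_preimage]; exact hq2⟩⟩
    · obtain ⟨q, hq1, hq2⟩ := exists_rat_btwn hlt
      refine Set.mem_iUnion.mpr ⟨q, Or.inr ⟨by simp [Set.mem_preimage]; exact hq2, ?_⟩⟩
      simp [Set.mem_preimage]; exact le_of_lt hq1
  refine measure_mono_null cover (measure_iUnion_null fun q => measure_union_null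
    (key _ measurableSet_Iic) (key _ measurableSet_Iic.compl))

/-- For a non-degenerate `X` symmetric around `0`, set `Y = X` and `Yₙ = -X`.
Then the Markov products `(Yₙ, Yₙ')` and `(Y, Y')` have the same distribution,
although `(X, Yₙ) = (X, -X)` and `(X, Y) = (X, X)` do not. -/
theorem markov_product_eq_distrib_but_joint_not
    (μ : Measure Ω) [IsProbabilityMeasure μ]
    (X : Ω → ℝ) (hX : Measurable X)
    (hsymm : Measure.map X μ = Measure.map (fun ω => -X ω) μ)
    (hnondeg : ¬ ∃ c : ℝ, X =ᵐ[μ] fun _ => c)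
    (Y' Yn' : Ω → ℝ) (hY' : Measurable Y') (hYn' : Measurable Yn')
    (hcopy : IsCondIndepCopy μ X hX X Y')
    (hcopyn : IsCondIndepCopy μ X hX (fun ω => -X ω) Yn') :
    Measure.map (fun ω => (-X ω, Yn' ω)) μ = Measure.map (fun ω => (X ω, Y' ω)) μ ∧
      Measure.map (fun ω => (X ω, -X ω)) μ ≠ Measure.map (fun ω => (X ω, X ω)) μ := by
  have hnX : Measurable fun ω => -X ω := hX.neg
  have h1 : Y' =ᵐ[μ] X :=
    copy_of_measurable_eq μ X hX X Y' hY' (fun s hs => ⟨s, hs, rfl⟩) hcopy.2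
  have h2 : Yn' =ᵐ[μ] fun ω => -X ω :=
    copy_of_measurable_eq μ X hX (fun ω => -X ω) Yn' hYn'
      (fun s hs => ⟨Neg.neg ⁻¹' s, measurable_neg hs, rfl⟩) hcopyn.2
  constructor
  · have e1 : (fun ω => (-X ω, Yn' ω)) =ᵐ[μ] (fun ω => (-X ω, -X ω)) := by
      filter_upwards [h2] with ω hω; rw [hω]
    have e2 : (fun ω => (X ω, Y' ω)) =ᵐ[μ] (fun ω => (X ω, X ω)) := by
      filter_upwards [h1] with ω hω; rw [hω]
    rw [Measure.map_congr e1, Measure.map_congr e2]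
    have hd : Measurable fun x : ℝ => (x, x) := measurable_id.prodMk measurable_id
    calc Measure.map (fun ω => (-X ω, -X ω)) μ
        = Measure.map (fun x : ℝ => (x, x)) (Measure.map (fun ω => -X ω) μ) := by
          rw [Measure.map_map hd hnX]; rfl
      _ = Measure.map (fun x : ℝ => (x, x)) (Measure.map X μ) := by rw [hsymm]
      _ = Measure.map (fun ω => (X ω, X ω)) μ := by rw [Measure.map_map hd hX]; rfl
  · intro hEq
    have hDm : MeasurableSet {p : ℝ × ℝ | p.1 ≠ p.2} :=
      (measurableSet_eq_fun measurable_fst measurable_snd).compl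
    have hL : Measure.map (fun ω => (X ω, -X ω)) μ {p : ℝ × ℝ | p.1 ≠ p.2}
        = μ {ω | X ω ≠ -X ω} := by
      rw [Measure.map_apply (hX.prodMk hnX) hDm]; rfl
    have hR : Measure.map (fun ω => (X ω, X ω)) μ {p : ℝ × ℝ | p.1 ≠ p.2}
        = 0 := by
      rw [Measure.map_apply (hX.prodMk hX) hDm]
      have : (fun ω => (X ω, X ω)) ⁻¹' {p : ℝ × ℝ | p.1 ≠ p.2} = ∅ := by
        ext ω; simp
      rw [this]; simp
    have h0 : μ {ω | X ω ≠ -X ω} = 0 := by rw [← hL, hEq, hR]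
    apply hnondeg
    refine ⟨0, ?_⟩
    have : {ω | ¬ X ω = (0:ℝ)} ⊆ {ω | X ω ≠ -X ω} := by
      intro ω hω
      simp only [Set.mem_setOf_eq] at *
      intro h; apply hω; linarith [h]
    exact measure_mono_null this h0
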